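/- In the enlarged canonical space construction for two solutions of the FBSDE, define z^i_t := lim_{n→∞} n(ζ^i_t − ζ^i_{(t−1/n)^+}) whenever the limit exists and z^i_t := 0 otherwise, for i = 1,2. Then Q-almost surely ζ^i_t = ∫_0^t z^i_s ds for all t ≥ 0, and E^Q[∫_0^∞ e^{−rt}|z^i_t|² dt] ≤ E^{P^i}[∫_0^∞ e^{−rt}|Z^i_t|² dt]. -/

import Mathlib

open MeasureTheory ProbabilityTheory Real Filter Set
open scoped ENNReal NNReal

noncomputable section

namespace YW

/-! ### Path spaces -/

/-- Continuous real paths (indexed by `ℝ`; only times `t ≥ 0` are relevant). -/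
def Cp : Type := C(ℝ, ℝ)

/-- Continuous real paths starting at `0`, i.e. `C_0([0,∞);ℝ)`. -/
def C0 : Type := {w : C(ℝ, ℝ) // w 0 = 0}

/-- Evaluation of a path at time `t`. -/
def evp (t : ℝ) (w : Cp) : ℝ := ContinuousMap.toFun w t

/-- Evaluation of a path starting at `0` at time `t`. -/
def ev (t : ℝ) (w : C0) : ℝ := ContinuousMap.toFun w.1 t

/-- The cylinder σ-algebra `σ(w(s) : s ≥ 0)` on `Cp`. -/
instance : MeasurableSpace Cp :=
  ⨆ s ∈ Set.Ici (0:ℝ), MeasurableSpace.comap (evp s) (borel ℝ)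

/-- The σ-algebra `B_∞ = σ(w(s) : s ≥ 0)` on `C0`, used as its measurable structure. -/
instance : MeasurableSpace C0 :=
  ⨆ s ∈ Set.Ici (0:ℝ), MeasurableSpace.comap (ev s) (borel ℝ)

/-- The σ-algebra `B_t = σ(w(s) : 0 ≤ s ≤ t)` on `C0`. -/
def pathFilt (t : ℝ) : MeasurableSpace C0 :=
  ⨆ s ∈ Set.Icc (0:ℝ) t, MeasurableSpace.comap (ev s) (borel ℝ)

/-- Augmentation (completion) of a σ-algebra `m₀` on `α` by the `μ`-null sets, where `μ` is a
measure on the ambient σ-algebra `mAmb`. -/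
def augment {α : Type} (m₀ mAmb : MeasurableSpace α) (μ : @Measure α mAmb) :
    MeasurableSpace α :=
  m₀ ⊔ MeasurableSpace.generateFrom
    {s | ∃ t, @MeasurableSet α mAmb t ∧ μ t = 0 ∧ s ⊆ t}

/-- The completed σ-algebra `B̄_∞` on `C0` (w.r.t. the Wiener measure `μW`). -/
def mbarInf (μW : Measure C0) : MeasurableSpace C0 :=
  augment inferInstance inferInstance μW

/-- The augmented filtration `B̄_t` on `C0` (w.r.t. the Wiener measure `μW`). -/
def mbar (μW : Measure C0) (t : ℝ) : MeasurableSpace C0 :=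
  augment (pathFilt t) inferInstance μW

/-! ### Brownian motion, `L_r²` spaces and set-ups -/

variable {Ω : Type} [mΩ : MeasurableSpace Ω]

/-- `B` is a Brownian motion with respect to the family of σ-algebras `𝔽` under `P`. -/
def IsBMFam (P : Measure Ω) (𝔽 : ℝ → MeasurableSpace Ω) (B : ℝ → Ω → ℝ) : Prop :=
  (∀ᵐ ω ∂P, B 0 ω = 0) ∧
  (∀ t, 0 ≤ t → @Measurable Ω ℝ (𝔽 t) _ (B t)) ∧
  (∀ s t, 0 ≤ s → s ≤ t →
    P.map (fun ω => B t ω - B s ω) = gaussianReal 0 (Real.toNNReal (t - s))) ∧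
  (∀ s t, 0 ≤ s → s ≤ t →
    Indep (MeasurableSpace.comap (fun ω => B t ω - B s ω) (borel ℝ)) (𝔽 s) P)

/-- The squared exponentially weighted norm `‖v‖_r² = E[∫_0^∞ e^{-rt}|v_t|² dt]`. -/
noncomputable def rNormSq (P : Measure Ω) (r : ℝ) (v : ℝ → Ω → ℝ) : ℝ≥0∞ :=
  ∫⁻ ω, ∫⁻ t in Set.Ioi (0 : ℝ), ENNReal.ofReal (Real.exp (-r * t) * (v t ω) ^ 2) ∂volume ∂P

/-- Membership in `L_r²`. -/
def MemLr (P : Measure Ω) (r : ℝ) (v : ℝ → Ω → ℝ) : Prop := rNormSq P r v < ⊤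

/-- The analogous squared norm for `ℝ^m`-valued processes. -/
noncomputable def rNormSqV (P : Measure Ω) (r : ℝ) {m : ℕ}
    (v : ℝ → Ω → Fin m → ℝ) : ℝ≥0∞ :=
  ∫⁻ ω, ∫⁻ t in Set.Ioi (0 : ℝ), ENNReal.ofReal (Real.exp (-r * t) * ‖v t ω‖ ^ 2) ∂volume ∂P

/-- A set-up: a complete filtered probability space carrying a Brownian motion `B` (recorded
through its path map `Bp : Ω → C0`) and `F₀`-measurable square-integrable inputs `ξ, η`. -/
def IsSetup (P : Measure Ω) (𝔽 : ℝ → MeasurableSpace Ω)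
    (Bp : Ω → C0) (ξ η : Ω → ℝ) : Prop :=
  IsProbabilityMeasure P ∧ Monotone 𝔽 ∧ (∀ t, 𝔽 t ≤ mΩ) ∧
  Measurable Bp ∧ IsBMFam P 𝔽 (fun t ω => ev t (Bp ω)) ∧
  @Measurable Ω ℝ (𝔽 0) _ ξ ∧ MemLp ξ 2 P ∧
  @Measurable Ω ℝ (𝔽 0) _ η ∧ MemLp η 2 P

/-- Conditions on the coefficients `φ, ψ : ℝ × ℝ⁺ × C_0([0,∞);ℝ) → ℝ^m`:
measurability w.r.t. `B(ℝ) ⊗ B(ℝ⁺) ⊗ B̄_∞`, continuity in `t`, and `B̄_t`-adaptedness. -/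
def GoodCoef {m : ℕ} (μW : Measure C0) (φ : ℝ → ℝ → C0 → Fin m → ℝ) : Prop :=
  @Measurable (ℝ × ℝ × C0) (Fin m → ℝ)
    (MeasurableSpace.prod inferInstance
      (MeasurableSpace.prod inferInstance (mbarInf μW))) _
    (fun q => φ q.1 q.2.1 q.2.2) ∧
  (∀ x w, Continuous fun t => φ x t w) ∧
  (∀ x t, @Measurable C0 (Fin m → ℝ) (mbar μW t) _ (φ x t))

/-- `(X,Y,Z)` is an `L_r²` solution of the FBSDE (3.25):
`dX_t = G(t, X_t, Y_t, L_{(X_t, φ_t(η,B))}, ψ_t(η,B))dt + dB_t`,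
`dY_t = -F(t, X_t, Y_t, L_{(X_t, φ_t(η,B))}, ψ_t(η,B))dt + Z_t dB_t`, `X_0 = ξ`,
where `SI Z` denotes the stochastic integral `∫_0^· Z_s dB_s`. -/
def Solves (P : Measure Ω) (𝔽 : ℝ → MeasurableSpace Ω)
    (Bp : Ω → C0) (SI : (ℝ → Ω → ℝ) → ℝ → Ω → ℝ)
    {m : ℕ} (r : ℝ)
    (G F : ℝ → ℝ → ℝ → Measure (ℝ × (Fin m → ℝ)) → (Fin m → ℝ) → ℝ)
    (φ ψ : ℝ → ℝ → C0 → Fin m → ℝ)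
    (ξ η : Ω → ℝ) (X Y Z : ℝ → Ω → ℝ) : Prop :=
  (∀ t, 0 ≤ t → @Measurable Ω ℝ (𝔽 t) _ (X t) ∧ @Measurable Ω ℝ (𝔽 t) _ (Y t) ∧
    @Measurable Ω ℝ (𝔽 t) _ (Z t)) ∧
  MemLr P r X ∧ MemLr P r Y ∧ MemLr P r Z ∧
  (∀ᵐ ω ∂P, X 0 ω = ξ ω) ∧
  (∀ t, 0 ≤ t → ∀ᵐ ω ∂P,
    X t ω = ξ ω + (∫ s in (0:ℝ)..t,
        G s (X s ω) (Y s ω)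
          (P.map fun ω' => (X s ω', φ (η ω') s (Bp ω')))
          (ψ (η ω) s (Bp ω)))
      + ev t (Bp ω)) ∧
  (∀ t, 0 ≤ t → ∀ᵐ ω ∂P,
    Y t ω = Y 0 ω - (∫ s in (0:ℝ)..t,
        F s (X s ω) (Y s ω)
          (P.map fun ω' => (X s ω', φ (η ω') s (Bp ω')))
          (ψ (η ω) s (Bp ω)))
      + SI Z t ω)


/-! ### The enlarged canonical space -/

/-- `Ω_input = ℝ² × C_0([0,∞);ℝ)`. -/
abbrev Ωin : Type := ℝ × ℝ × C0

/-- `Ω_output = C([0,∞);ℝ)³`. -/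
abbrev Ωout : Type := Cp × Cp × Cp

/-- `Ω_canon = Ω_input × Ω_output`. -/
abbrev Ωcanon : Type := Ωin × Ωout

/-- `Ω_total = Ω_input × Ω_output × Ω_output`. -/
abbrev Ωtot : Type := Ωin × Ωout × Ωout

/-- canonical coordinates on `Ω_total` -/
def ca (ωT : Ωtot) : ℝ := ωT.1.1
def cb (ωT : Ωtot) : ℝ := ωT.1.2.1
def cw (t : ℝ) (ωT : Ωtot) : ℝ := ev t ωT.1.2.2
def cx1 (t : ℝ) (ωT : Ωtot) : ℝ := evp t ωT.2.1.1
def cy1 (t : ℝ) (ωT : Ωtot) : ℝ := evp t ωT.2.1.2.1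
def cz1 (t : ℝ) (ωT : Ωtot) : ℝ := evp t ωT.2.1.2.2
def cx2 (t : ℝ) (ωT : Ωtot) : ℝ := evp t ωT.2.2.1
def cy2 (t : ℝ) (ωT : Ωtot) : ℝ := evp t ωT.2.2.2.1
def cz2 (t : ℝ) (ωT : Ωtot) : ℝ := evp t ωT.2.2.2.2

open Classical in
/-- The density `z_t = lim_n n(ζ_t − ζ_{(t−1/n)⁺})` of an absolutely continuous path `ζ`
(defined as `0` whenever the limit does not exist). -/
noncomputable def dlim (ζ : ℝ → ℝ) (t : ℝ) : ℝ :=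
  if h : ∃ L : ℝ, Tendsto (fun n : ℕ => (n : ℝ) * (ζ t - ζ (max (t - 1/(n : ℝ)) 0)))
      atTop (nhds L) then h.choose else 0

/-! ### Auxiliary lemmas -/

def dseq (ζ : ℝ → ℝ) (t : ℝ) (n : ℕ) : ℝ := (n : ℝ) * (ζ t - ζ (max (t - 1/(n : ℝ)) 0))

open Classical in
lemma dlim_def (ζ : ℝ → ℝ) (t : ℝ) :
    dlim ζ t = if h : ∃ L : ℝ, Tendsto (dseq ζ t) atTop (nhds L) then h.choose else 0 := rfl

lemma tendsto_dseq_dlim {ζ : ℝ → ℝ} {t : ℝ} (h : ∃ L : ℝ, Tendsto (dseq ζ t) atTop (nhds L)) :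
    Tendsto (dseq ζ t) atTop (nhds (dlim ζ t)) := by
  rw [dlim_def, dif_pos h]; exact h.choose_spec

lemma dlim_of_not_exists {ζ : ℝ → ℝ} {t : ℝ}
    (h : ¬ ∃ L : ℝ, Tendsto (dseq ζ t) atTop (nhds L)) : dlim ζ t = 0 := by
  rw [dlim_def, dif_neg h]

lemma dlim_eq_of_tendsto {ζ : ℝ → ℝ} {t L : ℝ}
    (h : Tendsto (dseq ζ t) atTop (nhds L)) : dlim ζ t = L :=
  tendsto_nhds_unique (tendsto_dseq_dlim ⟨L, h⟩) h

lemma dlim_congr {ζ ξ : ℝ → ℝ} {t : ℝ} (ht : 0 ≤ t) (h : ∀ u, 0 ≤ u → ζ u = ξ u) :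
    dlim ζ t = dlim ξ t := by
  have hs : dseq ζ t = dseq ξ t := by
    funext n
    simp only [dseq, h t ht, h (max (t - 1/(n:ℝ)) 0) (le_max_right _ _)]
  rw [dlim_def, dlim_def, hs]

lemma intervalIntegrable_mono_right {f : ℝ → ℝ} {s t : ℝ} (hs : 0 ≤ s) (hst : s ≤ t)
    (h : IntervalIntegrable f volume 0 t) : IntervalIntegrable f volume 0 s :=
  h.mono_set (by rw [uIcc_of_le hs, uIcc_of_le (hs.trans hst)]; exact Icc_subset_Icc le_rfl hst)

lemma ae_tendsto_dseq {f w : ℝ → ℝ} {b : ℝ} (hb : 0 < b)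
    (hf : IntervalIntegrable f volume 0 b)
    (hw : ∀ t, 0 ≤ t → w t = ∫ s in (0:ℝ)..t, f s) :
    ∀ᵐ t ∂(volume.restrict (Ioo 0 b)), Tendsto (dseq w t) atTop (nhds (f t)) := by
  set g : ℝ → ℝ := (Ioc (0:ℝ) b).indicator f with hg_def
  have hg : Integrable g := (integrable_indicator_iff measurableSet_Ioc).2 hf.1
  set v := IsUnifLocDoublingMeasure.vitaliFamily (volume : Measure ℝ) 1 with hv
  have hvit := v.ae_tendsto_average hg.locallyIntegrable
  rw [MeasureTheory.ae_restrict_iff' measurableSet_Ioo]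
  filter_upwards [hvit] with x hx hmem
  have hx0 : (0:ℝ) < x := hmem.1
  have hxb : x < b := hmem.2
  have hIcc : Tendsto (fun n : ℕ => Icc (x - 1/(n:ℝ)) x) atTop (v.filterAt x) := by
    apply (Real.tendsto_Icc_vitaliFamily_left x).comp
    rw [tendsto_nhdsWithin_iff]
    constructor
    · have h1 : Tendsto (fun n : ℕ => 1/(n:ℝ)) atTop (nhds 0) :=
        tendsto_one_div_atTop_nhds_zero_nat
      have := tendsto_const_nhds.sub h1 (f := fun _ : ℕ => x)
      simpa using this
    · filter_upwards [eventually_gt_atTop 0] with n hn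
      have : (0:ℝ) < 1/(n:ℝ) := by positivity
      simp only [mem_Iio]; linarith
  have havg := hx.comp hIcc
  have hgx : g x = f x := indicator_of_mem (mem_Ioc.mpr ⟨hx0, hxb.le⟩) f
  rw [hgx] at havg
  apply havg.congr'
  have h1 : Tendsto (fun n : ℕ => 1/(n:ℝ)) atTop (nhds 0) := tendsto_one_div_atTop_nhds_zero_nat
  filter_upwards [h1.eventually_lt_const hx0, eventually_gt_atTop 0] with n hn hn0
  have ha0 : (0:ℝ) < x - 1/(n:ℝ) := by linarith
  have hinv : (0:ℝ) < 1/(n:ℝ) := by positivity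
  set a := x - 1/(n:ℝ) with ha_def
  have hmax : max (x - 1/(n:ℝ)) 0 = a := max_eq_left ha0.le
  have hax : a ≤ x := by rw [ha_def]; linarith
  have hab : a ≤ b := by rw [ha_def]; linarith
  have hsub1 : IntervalIntegrable f volume 0 a :=
    hf.mono_set (by rw [uIcc_of_le ha0.le, uIcc_of_le hb.le]; exact Icc_subset_Icc le_rfl hab)
  have hsub2 : IntervalIntegrable f volume a x :=
    hf.mono_set (by rw [uIcc_of_le hax, uIcc_of_le hb.le]; exact Icc_subset_Icc ha0.le hxb.le)
  have hadd : (∫ s in (0:ℝ)..a, f s) + ∫ s in a..x, f s = ∫ s in (0:ℝ)..x, f s :=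
    intervalIntegral.integral_add_adjacent_intervals hsub1 hsub2
  have hxa : x - a = 1/(n:ℝ) := by rw [ha_def]; ring
  have hIccvol : (volume (Icc a x)).toReal = 1/(n:ℝ) := by
    rw [Real.volume_Icc, hxa, ENNReal.toReal_ofReal hinv.le]
  have hgf : ∫ y in Icc a x, g y = ∫ y in Icc a x, f y := by
    apply setIntegral_congr_fun measurableSet_Icc
    intro y hy
    exact indicator_of_mem (mem_Ioc.mpr ⟨lt_of_lt_of_le ha0 hy.1, le_trans hy.2 hxb.le⟩) f
  have : (⨍ y in Icc a x, g y) = (n:ℝ) * ∫ s in a..x, f s := by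
    rw [setAverage_eq, hgf, measureReal_def, hIccvol, integral_Icc_eq_integral_Ioc,
      ← intervalIntegral.integral_of_le hax, smul_eq_mul, one_div, inv_inv]
  rw [Function.comp_apply, this]
  have hwx : w x = ∫ s in (0:ℝ)..x, f s := hw x hx0.le
  have hwa : w (max (x - 1/(n:ℝ)) 0) = ∫ s in (0:ℝ)..a, f s := by rw [hmax]; exact hw a ha0.le
  simp only [dseq, hwx, hwa, ← hadd]
  ring

lemma ae_dlim_eq_lt {f w : ℝ → ℝ} {T : ℝ}
    (hint : ∀ b, 0 ≤ b → b < T → IntervalIntegrable f volume 0 b)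
    (hw : ∀ t, 0 ≤ t → w t = ∫ s in (0:ℝ)..t, f s) :
    ∀ᵐ t ∂(volume.restrict (Ioo 0 T)), dlim w t = f t := by
  have hcover : Ioo 0 T ⊆ ⋃ q : {q : ℚ // 0 < (q:ℝ) ∧ (q:ℝ) < T}, Ioo 0 ((q:ℚ):ℝ) := by
    intro x hx
    obtain ⟨q, hq1, hq2⟩ := exists_rat_btwn hx.2
    exact mem_iUnion.2 ⟨⟨q, hx.1.trans hq1, hq2⟩, ⟨hx.1, hq1⟩⟩
  have hres : ∀ᵐ t ∂(volume.restrict (⋃ q : {q : ℚ // 0 < (q:ℝ) ∧ (q:ℝ) < T}, Ioo 0 ((q:ℚ):ℝ))),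
      dlim w t = f t := by
    rw [ae_restrict_iUnion_iff]
    rintro ⟨q, hq0, hqT⟩
    filter_upwards [ae_tendsto_dseq hq0 (hint q hq0.le hqT) hw] with t ht
    exact dlim_eq_of_tendsto ht
  exact ae_restrict_of_ae_restrict_of_subset hcover hres

lemma ae_dlim_eq_all {f w : ℝ → ℝ}
    (hint : ∀ b, 0 ≤ b → IntervalIntegrable f volume 0 b)
    (hw : ∀ t, 0 ≤ t → w t = ∫ s in (0:ℝ)..t, f s) :
    ∀ᵐ t ∂(volume.restrict (Ioi (0:ℝ))), dlim w t = f t := by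
  have hcover : Ioi (0:ℝ) ⊆ ⋃ n : ℕ, Ioo 0 (n:ℝ) := by
    intro x hx
    obtain ⟨n, hn⟩ := exists_nat_gt x
    exact mem_iUnion.2 ⟨n, hx, hn⟩
  have hres : ∀ᵐ t ∂(volume.restrict (⋃ n : ℕ, Ioo 0 (n:ℝ))), dlim w t = f t := by
    rw [ae_restrict_iUnion_iff]
    intro n
    rcases Nat.eq_zero_or_pos n with h0 | hpos
    · simp [h0]
    · have hn0 : (0:ℝ) < n := by exact_mod_cast hpos
      filter_upwards [ae_tendsto_dseq hn0 (hint n hn0.le) hw] with t ht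
      exact dlim_eq_of_tendsto ht
  exact ae_restrict_of_ae_restrict_of_subset hcover hres

lemma measurable_evp {s : ℝ} (hs : 0 ≤ s) : Measurable (evp s) := by
  rw [measurable_iff_comap_le,
    show (Real.measurableSpace : MeasurableSpace ℝ) = borel ℝ from BorelSpace.measurable_eq]
  exact le_iSup₂ (f := fun (u : ℝ) (_ : u ∈ Set.Ici (0:ℝ)) =>
    MeasurableSpace.comap (evp u) (borel ℝ)) s hs

lemma continuous_w (w : Cp) : Continuous (fun t => evp t w) :=
  ContinuousMap.continuous (show C(ℝ,ℝ) from w)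

lemma measurable_ev2 :
    Measurable (Function.uncurry (fun (t : ℝ) (w : Cp) => evp (max t 0) w)) := by
  apply measurable_uncurry_of_continuous_of_measurable
  · intro w
    exact (continuous_w w).comp (continuous_max.comp (continuous_id.prodMk continuous_const))
      |>.congr (fun t => rfl)
  · intro t
    exact measurable_evp (le_max_right t 0)

/-- The density functional, jointly measurably parametrized over `Cp × ℝ`. -/
def D (p : Cp × ℝ) : ℝ := dlim (fun u => evp (max u 0) p.1) p.2

lemma measurable_D : Measurable D := by
  set gs : ℕ → Cp × ℝ → ℝ := fun n p => dseq (fun u => evp (max u 0) p.1) p.2 n with hgs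
  have hgs_meas : ∀ n, Measurable (gs n) := by
    intro n
    have h1 : Measurable fun p : Cp × ℝ => evp (max p.2 0) p.1 :=
      measurable_ev2.comp (measurable_snd.prodMk measurable_fst)
    have h2 : Measurable fun p : Cp × ℝ => evp (max (max (p.2 - 1/(n:ℝ)) 0) 0) p.1 :=
      measurable_ev2.comp ((measurable_snd.sub measurable_const).max measurable_const
        |>.prodMk measurable_fst)
    exact measurable_const.mul (h1.sub h2)
  have hE : MeasurableSet {p : Cp × ℝ | ∃ c : ℝ, Tendsto (fun n => gs n p) atTop (nhds c)} :=
    measurableSet_exists_tendsto hgs_meas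
  have htend : ∀ p, Tendsto (fun n =>
      ({p : Cp × ℝ | ∃ c : ℝ, Tendsto (fun n => gs n p) atTop (nhds c)}).indicator (gs n) p)
      atTop (nhds (D p)) := by
    intro p
    by_cases hp : p ∈ {p : Cp × ℝ | ∃ c : ℝ, Tendsto (fun n => gs n p) atTop (nhds c)}
    · have := tendsto_dseq_dlim (ζ := fun u => evp (max u 0) p.1) (t := p.2) hp
      apply Tendsto.congr' (Eventually.of_forall fun n => (indicator_of_mem hp (gs n)).symm)
      exact this
    · have hD0 : D p = 0 := dlim_of_not_exists (ζ := fun u => evp (max u 0) p.1) (t := p.2) hp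
      rw [hD0]
      apply Tendsto.congr' (Eventually.of_forall fun n => (indicator_of_notMem hp (gs n)).symm)
      exact tendsto_const_nhds
  exact measurable_of_tendsto_metrizable' atTop
    (fun n => (hgs_meas n).indicator hE) (tendsto_pi_nhds.mpr htend)

lemma dlim_evp_eq_D (w : Cp) {t : ℝ} (ht : 0 ≤ t) : dlim (fun u => evp u w) t = D (w, t) :=
  dlim_congr ht (fun u hu => by rw [max_eq_left hu])

/-- The weighted squared-norm functional on paths. -/
def Phi (r : ℝ) (w : Cp) : ℝ≥0∞ :=
  ∫⁻ t in Ioi (0:ℝ), ENNReal.ofReal (Real.exp (-r * t) * (D (w, t))^2)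

lemma measurable_Phi (r : ℝ) : Measurable (Phi r) := by
  have h : Measurable fun p : Cp × ℝ => ENNReal.ofReal (Real.exp (-r * p.2) * (D p)^2) := by
    apply ENNReal.measurable_ofReal.comp
    exact ((measurable_const.mul measurable_snd).exp).mul (measurable_D.pow_const 2)
  exact h.lintegral_prod_right'

def Jq (q : ℝ) (w : Cp) : ℝ := ∫ s in (0:ℝ)..q, D (w, s)

lemma measurable_Jq {q : ℝ} (hq : 0 ≤ q) : Measurable (Jq q) := by
  have hD : StronglyMeasurable D := measurable_D.stronglyMeasurable
  have heq : Jq q = fun w => ∫ s, D (w, s) ∂(volume.restrict (Ioc 0 q)) := by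
    funext w
    exact intervalIntegral.integral_of_le hq
  rw [heq]
  exact hD.integral_prod_right'.measurable

lemma integral_dlim_eq_Jq (w : Cp) {q : ℝ} (hq : 0 ≤ q) :
    (∫ s in (0:ℝ)..q, dlim (fun u => evp u w) s) = Jq q w :=
  intervalIntegral.integral_congr (fun s hs => by
    rw [uIcc_of_le hq] at hs
    exact dlim_evp_eq_D w hs.1)

/-- The measurable "good set" of paths. -/
def Gset : Set Cp :=
  {w | ∀ q : ℚ, 0 ≤ (q:ℝ) → evp q w = ∫ s in (0:ℝ)..(q:ℝ), dlim (fun u => evp u w) s}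

lemma measurableSet_Gset : MeasurableSet Gset := by
  have hG : Gset = ⋂ q : ℚ, ⋂ _ : 0 ≤ (q:ℝ), {w : Cp | evp q w = Jq q w} := by
    ext w
    simp only [Gset, mem_iInter, mem_setOf_eq]
    refine forall_congr' fun q => forall_congr' fun hq => ?_
    rw [integral_dlim_eq_Jq w hq]
  rw [hG]
  exact MeasurableSet.iInter fun q => MeasurableSet.iInter fun hq =>
    measurableSet_eq_fun (measurable_evp hq) (measurable_Jq hq)

lemma eq_of_rat_dense_open {F G : ℝ → ℝ} {U : Set ℝ} (hU : IsOpen U)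
    (hF : Continuous F) (hG : Continuous G)
    (h : ∀ q : ℚ, (q:ℝ) ∈ U → F q = G q) : ∀ t ∈ closure U, F t = G t := by
  have hE : IsClosed {t : ℝ | F t = G t} := isClosed_eq hF hG
  have h1 : U ⊆ closure (U ∩ Set.range ((↑) : ℚ → ℝ)) :=
    Rat.denseRange_cast.open_subset_closure_inter hU
  have h2 : U ∩ Set.range ((↑) : ℚ → ℝ) ⊆ {t : ℝ | F t = G t} := by
    rintro x ⟨hxU, q, rfl⟩
    exact h q hxU
  have h3 : closure U ⊆ {t : ℝ | F t = G t} := by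
    calc closure U ⊆ closure (closure (U ∩ Set.range ((↑) : ℚ → ℝ))) := closure_mono h1
    _ = closure (U ∩ Set.range ((↑) : ℚ → ℝ)) := closure_closure
    _ ⊆ {t : ℝ | F t = G t} := hE.closure_subset_iff.2 h2
  exact fun t ht => h3 ht

lemma eq_of_rat_Ici {F G : ℝ → ℝ} {T : ℝ} (hF : Continuous F) (hG : Continuous G)
    (h : ∀ q : ℚ, T < (q:ℝ) → F q = G q) : ∀ t, T ≤ t → F t = G t := by
  intro t ht
  have := eq_of_rat_dense_open isOpen_Ioi hF hG (fun q hq => h q hq) t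
  rw [closure_Ioi] at this
  exact this ht

lemma eq_of_rat_Icc {F G : ℝ → ℝ} {a b : ℝ} (hab : a < b) (hF : Continuous F) (hG : Continuous G)
    (h : ∀ q : ℚ, (q:ℝ) ∈ Ioo a b → F q = G q) : ∀ t ∈ Icc a b, F t = G t := by
  intro t ht
  have := eq_of_rat_dense_open isOpen_Ioo hF hG (fun q hq => h q hq) t
  rw [closure_Ioo hab.ne] at this
  exact this ht

lemma trunc_primitive {g : ℝ → ℝ} {b : ℝ} (hb : 0 ≤ b)
    (hPb : IntervalIntegrable g volume 0 b) :
    ∃ J : ℝ → ℝ, Continuous J ∧ ∀ x, 0 ≤ x → x ≤ b → J x = ∫ s in (0:ℝ)..x, g s := by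
  refine ⟨fun x => ∫ s in (0:ℝ)..x, (Ioc (0:ℝ) b).indicator g s, ?_, ?_⟩
  · exact ((integrable_indicator_iff measurableSet_Ioc).2 hPb.1).continuous_primitive 0
  · intro x hx0 hxb
    apply intervalIntegral.integral_congr_ae
    refine Eventually.of_forall fun s hs => ?_
    rw [uIoc_of_le hx0] at hs
    exact indicator_of_mem (mem_Ioc.mpr ⟨hs.1, hs.2.trans hxb⟩) g

lemma key_main {f : ℝ → ℝ} {w : Cp} (hw : ∀ t, 0 ≤ t → evp t w = ∫ s in (0:ℝ)..t, f s) :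
    (∀ t, 0 ≤ t → evp t w = ∫ s in (0:ℝ)..t, dlim (fun u => evp u w) s) ∧
    (∀ᵐ t ∂(volume.restrict (Ioi (0:ℝ))), (dlim (fun u => evp u w) t)^2 ≤ (f t)^2) := by
  by_cases hall : ∀ b, 0 ≤ b → IntervalIntegrable f volume 0 b
  · have hae := ae_dlim_eq_all hall hw
    have hae' : ∀ᵐ s : ℝ ∂volume, s ∈ Ioi (0:ℝ) → dlim (fun u => evp u w) s = f s :=
      (ae_restrict_iff' measurableSet_Ioi).1 hae
    constructor
    · intro t ht
      have haet : ∀ᵐ s : ℝ ∂volume, s ∈ Set.uIoc (0:ℝ) t → dlim (fun u => evp u w) s = f s := by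
        filter_upwards [hae'] with s h1 hs
        rw [uIoc_of_le ht] at hs
        exact h1 hs.1
      rw [hw t ht]
      exact (intervalIntegral.integral_congr_ae haet).symm
    · filter_upwards [hae] with t ht
      rw [ht]
  · push_neg at hall
    obtain ⟨t₀, ht₀0, ht₀⟩ := hall
    set S : Set ℝ := {t : ℝ | 0 ≤ t ∧ ¬IntervalIntegrable f volume 0 t} with hS_def
    have hS : S.Nonempty := ⟨t₀, ht₀0, ht₀⟩
    have hbdd : BddBelow S := ⟨0, fun x hx => hx.1⟩
    set T := sInf S with hT_def
    have hT0 : 0 ≤ T := le_csInf hS fun x hx => hx.1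
    have hbelow : ∀ b, 0 ≤ b → b < T → IntervalIntegrable f volume 0 b := by
      intro b hb0 hbT
      by_contra hc
      exact absurd (csInf_le hbdd ⟨hb0, hc⟩) (not_le.mpr hbT)
    have habove : ∀ t, T < t → ¬IntervalIntegrable f volume 0 t := by
      intro t hTt hc
      obtain ⟨s, hsS, hst⟩ := exists_lt_of_csInf_lt hS hTt
      exact hsS.2 (intervalIntegrable_mono_right hsS.1 hst.le hc)
    have hwz : ∀ t, T < t → evp t w = 0 := fun t h => by
      rw [hw t (hT0.trans h.le), intervalIntegral.integral_undef (habove t h)]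
    have hwT : evp T w = 0 := by
      have h1 : Tendsto (fun u => evp u w) (nhdsWithin T (Ioi T)) (nhds (evp T w)) :=
        ((continuous_w w).tendsto T).mono_left nhdsWithin_le_nhds
      have h2 : Tendsto (fun u => evp u w) (nhdsWithin T (Ioi T)) (nhds 0) := by
        apply tendsto_const_nhds.congr'
        filter_upwards [self_mem_nhdsWithin] with s hs
        exact (hwz s hs).symm
      exact tendsto_nhds_unique h1 h2
    have hwz' : ∀ t, T ≤ t → evp t w = 0 := by
      intro t h
      rcases eq_or_lt_of_le h with rfl | h'
      · exact hwT
      · exact hwz t h'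
    have hdz : ∀ t, T < t → dlim (fun u => evp u w) t = 0 := by
      intro t hTt
      apply dlim_eq_of_tendsto
      apply tendsto_const_nhds.congr'
      have h1 : Tendsto (fun n : ℕ => 1/(n:ℝ)) atTop (nhds 0) := tendsto_one_div_atTop_nhds_zero_nat
      filter_upwards [h1.eventually_lt_const (show (0:ℝ) < t - T by linarith),
        eventually_ge_atTop 1] with n hn hn1
      have hinv : (0:ℝ) ≤ 1/(n:ℝ) := by positivity
      have hTa : T ≤ t - 1/(n:ℝ) := by linarith
      have ha0 : (0:ℝ) ≤ t - 1/(n:ℝ) := hT0.trans hTa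
      simp only [dseq, max_eq_left ha0, hwz' t (by linarith), hwz' _ hTa, sub_zero, mul_zero]
    have hne : ∀ᵐ s : ℝ ∂volume, s ≠ T := by
      rw [ae_iff]
      have hset : {a : ℝ | ¬ a ≠ T} = {T} := by ext a; simp
      rw [hset]
      exact measure_singleton T
    have hae := ae_dlim_eq_lt hbelow hw
    have haeIoo : ∀ᵐ s : ℝ ∂volume, s ∈ Ioo 0 T → dlim (fun u => evp u w) s = f s :=
      (ae_restrict_iff' measurableSet_Ioo).1 hae
    have haeT : ∀ᵐ s : ℝ ∂volume, s ∈ Ioc 0 T → dlim (fun u => evp u w) s = f s := by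
      filter_upwards [haeIoo, hne] with s h1 h2 hs
      exact h1 ⟨hs.1, lt_of_le_of_ne hs.2 h2⟩
    constructor
    · intro t ht
      rcases le_or_gt t T with htT | hTt
      · have haet : ∀ᵐ s : ℝ ∂volume, s ∈ Set.uIoc (0:ℝ) t → dlim (fun u => evp u w) s = f s := by
          filter_upwards [haeT] with s h1 hs
          rw [uIoc_of_le ht] at hs
          exact h1 ⟨hs.1, hs.2.trans htT⟩
        rw [hw t ht]
        exact (intervalIntegral.integral_congr_ae haet).symm
      · have haeRes : (fun u => dlim (fun u => evp u w) u) =ᵐ[volume.restrict (Ioc 0 T)] f :=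
          (ae_restrict_iff' measurableSet_Ioc).2 haeT
        by_cases hPT : IntervalIntegrable f volume 0 T
        · have hDT : IntervalIntegrable (fun u => dlim (fun u => evp u w) u) volume 0 T := by
            rw [intervalIntegrable_iff_integrableOn_Ioc_of_le hT0]
            exact hPT.1.congr haeRes.symm
          have hD2 : IntervalIntegrable (fun u => dlim (fun u => evp u w) u) volume T t := by
            rw [intervalIntegrable_iff_integrableOn_Ioc_of_le hTt.le]
            apply (integrableOn_zero (s := Ioc T t)).congr
            refine (ae_restrict_iff' measurableSet_Ioc).2 (Eventually.of_forall fun s hs => ?_)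
            exact (hdz s hs.1).symm
          have hsplit := intervalIntegral.integral_add_adjacent_intervals hDT hD2
          have h0T : (∫ s in (0:ℝ)..T, dlim (fun u => evp u w) s) = evp T w := by
            rw [hw T hT0]
            exact intervalIntegral.integral_congr_ae (by
              filter_upwards [haeT] with s h1 hs
              rw [uIoc_of_le hT0] at hs
              exact h1 hs)
          have hTt0 : (∫ s in T..t, dlim (fun u => evp u w) s) = 0 := by
            have hz : (∫ s in T..t, dlim (fun u => evp u w) s) = ∫ s in T..t, (0:ℝ) := by
              apply intervalIntegral.integral_congr_ae
              refine Eventually.of_forall fun s hs => ?_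
              rw [uIoc_of_le hTt.le] at hs
              exact hdz s hs.1
            rw [hz, intervalIntegral.integral_zero]
          rw [hwz t hTt, ← hsplit, h0T, hTt0, hwT, add_zero]
        · have hnD : ¬IntervalIntegrable (fun u => dlim (fun u => evp u w) u) volume 0 t := by
            intro hc
            have h0T := intervalIntegrable_mono_right hT0 hTt.le hc
            rw [intervalIntegrable_iff_integrableOn_Ioc_of_le hT0] at h0T
            exact hPT ((intervalIntegrable_iff_integrableOn_Ioc_of_le hT0).2 (h0T.congr haeRes))
          rw [hwz t hTt, intervalIntegral.integral_undef hnD]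
    · filter_upwards [ae_restrict_of_ae haeIoo, ae_restrict_of_ae hne,
        ae_restrict_mem measurableSet_Ioi] with t h1 h2 ht
      rcases lt_trichotomy t T with hlt | heq | hgt
      · rw [h1 ⟨ht, hlt⟩]
      · exact absurd heq h2
      · rw [hdz t hgt]
        simpa using sq_nonneg (f t)

lemma key_ext (w : Cp) (hq : w ∈ Gset) :
    ∀ t, 0 ≤ t → evp t w = ∫ s in (0:ℝ)..t, dlim (fun u => evp u w) s := by
  set g : ℝ → ℝ := fun u => dlim (fun u => evp u w) u with hg_def
  by_cases hall : ∀ b, 0 ≤ b → IntervalIntegrable g volume 0 b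
  · intro t ht
    obtain ⟨J, hJc, hJ⟩ := trunc_primitive (by linarith : (0:ℝ) ≤ t + 1) (hall _ (by linarith))
    have heq := eq_of_rat_Icc (show (0:ℝ) < t + 1 by linarith) (continuous_w w) hJc
      (fun q hq' => by rw [hq q hq'.1.le, hJ q hq'.1.le hq'.2.le])
    have := heq t ⟨ht, by linarith⟩
    rw [this, hJ t ht (by linarith)]
  · push_neg at hall
    obtain ⟨t₀, ht₀0, ht₀⟩ := hall
    set S : Set ℝ := {t : ℝ | 0 ≤ t ∧ ¬IntervalIntegrable g volume 0 t} with hS_def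
    have hS : S.Nonempty := ⟨t₀, ht₀0, ht₀⟩
    have hbdd : BddBelow S := ⟨0, fun x hx => hx.1⟩
    set T := sInf S with hT_def
    have hT0 : 0 ≤ T := le_csInf hS fun x hx => hx.1
    have hbelow : ∀ b, 0 ≤ b → b < T → IntervalIntegrable g volume 0 b := by
      intro b hb0 hbT
      by_contra hc
      exact absurd (csInf_le hbdd ⟨hb0, hc⟩) (not_le.mpr hbT)
    have habove : ∀ t, T < t → ¬IntervalIntegrable g volume 0 t := by
      intro t hTt hc
      obtain ⟨s, hsS, hst⟩ := exists_lt_of_csInf_lt hS hTt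
      exact hsS.2 (intervalIntegrable_mono_right hsS.1 hst.le hc)
    have hwz : ∀ t, T ≤ t → evp t w = 0 := by
      apply eq_of_rat_Ici (continuous_w w) continuous_const
      intro q hq'
      rw [hq q (hT0.trans hq'.le), intervalIntegral.integral_undef (habove _ hq')]
    intro t ht
    rcases lt_trichotomy t T with hlt | heq | hgt
    · have hb0 : 0 < (t + T)/2 := by linarith
      have hbT : (t + T)/2 < T := by linarith
      obtain ⟨J, hJc, hJ⟩ := trunc_primitive hb0.le (hbelow _ hb0.le hbT)
      have heq := eq_of_rat_Icc hb0 (continuous_w w) hJc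
        (fun q hq' => by rw [hq q hq'.1.le, hJ q hq'.1.le hq'.2.le])
      have := heq t ⟨ht, by linarith⟩
      rw [this, hJ t ht (by linarith)]
    · by_cases hPT : IntervalIntegrable g volume 0 t
      · rcases eq_or_lt_of_le ht with h0 | h0
        · rw [← h0, intervalIntegral.integral_same]
          exact hwz 0 (h0.trans heq).ge
        · obtain ⟨J, hJc, hJ⟩ := trunc_primitive ht hPT
          have heq' := eq_of_rat_Icc h0 (continuous_w w) hJc
            (fun q hq' => by rw [hq q hq'.1.le, hJ q hq'.1.le hq'.2.le])
          have := heq' t ⟨ht, le_rfl⟩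
          rw [this, hJ t ht le_rfl]
      · rw [intervalIntegral.integral_undef hPT]
        exact hwz t heq.ge
    · rw [intervalIntegral.integral_undef (habove t hgt)]
      exact hwz t hgt.le

lemma transfer {Ω : Type} [mΩ : MeasurableSpace Ω] (P : Measure Ω) (r : ℝ)
    (Z : ℝ → Ω → ℝ) (ZC : Ω → Cp) (hmZC : Measurable ZC)
    (hZC : ∀ ω t, 0 ≤ t → evp t (ZC ω) = ∫ s in (0:ℝ)..t, Z s ω)
    {ΩT : Type} [MeasurableSpace ΩT] (QT : Measure ΩT) (pr : ΩT → Cp) (hpr : Measurable pr)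
    (hmap : QT.map pr = P.map ZC) :
    (∀ᵐ ωT ∂QT, ∀ t, 0 ≤ t →
      evp t (pr ωT) = ∫ s in (0:ℝ)..t, dlim (fun u => evp u (pr ωT)) s) ∧
    (∫⁻ ωT, ∫⁻ t in Set.Ioi (0:ℝ),
        ENNReal.ofReal (Real.exp (-r * t) * (dlim (fun u => evp u (pr ωT)) t) ^ 2) ∂volume ∂QT
      ≤ ∫⁻ ω, ∫⁻ t in Set.Ioi (0:ℝ),
        ENNReal.ofReal (Real.exp (-r * t) * (Z t ω) ^ 2) ∂volume ∂P) := by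
  have hmem : ∀ ω, ZC ω ∈ Gset := by
    intro ω q hq
    exact (key_main (f := fun s => Z s ω) (w := ZC ω) (hZC ω)).1 q hq
  have hc : QT (pr ⁻¹' Gsetᶜ) = 0 := by
    have h1 : (QT.map pr) Gsetᶜ = (P.map ZC) Gsetᶜ := by rw [hmap]
    rw [Measure.map_apply hpr measurableSet_Gset.compl,
      Measure.map_apply hmZC measurableSet_Gset.compl] at h1
    have h2 : ZC ⁻¹' Gsetᶜ = ∅ := by
      ext ω; simp [hmem ω]
    rw [h1, h2, measure_empty]
  have hae : ∀ᵐ ωT ∂QT, pr ωT ∈ Gset := by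
    rw [ae_iff]
    have hs : {ωT | ¬ pr ωT ∈ Gset} = pr ⁻¹' Gsetᶜ := rfl
    rw [hs, hc]
  constructor
  · filter_upwards [hae] with ωT h
    exact key_ext (pr ωT) h
  · have h1 : ∀ ωT, (∫⁻ t in Set.Ioi (0:ℝ),
        ENNReal.ofReal (Real.exp (-r * t) * (dlim (fun u => evp u (pr ωT)) t) ^ 2) ∂volume)
        = Phi r (pr ωT) := by
      intro ωT
      apply setLIntegral_congr_fun measurableSet_Ioi
      exact fun t ht => by rw [dlim_evp_eq_D _ (le_of_lt ht)]
    calc ∫⁻ ωT, ∫⁻ t in Set.Ioi (0:ℝ),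
        ENNReal.ofReal (Real.exp (-r * t) * (dlim (fun u => evp u (pr ωT)) t) ^ 2) ∂volume ∂QT
        = ∫⁻ ωT, Phi r (pr ωT) ∂QT := lintegral_congr h1
      _ = ∫⁻ w, Phi r w ∂(QT.map pr) := (lintegral_map (measurable_Phi r) hpr).symm
      _ = ∫⁻ w, Phi r w ∂(P.map ZC) := by rw [hmap]
      _ = ∫⁻ ω, Phi r (ZC ω) ∂P := lintegral_map (measurable_Phi r) hmZC
      _ ≤ ∫⁻ ω, ∫⁻ t in Set.Ioi (0:ℝ),
          ENNReal.ofReal (Real.exp (-r * t) * (Z t ω) ^ 2) ∂volume ∂P := by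
        apply lintegral_mono
        intro ω
        have hkey := (key_main (f := fun s => Z s ω) (w := ZC ω) (hZC ω)).2
        apply lintegral_mono_ae
        filter_upwards [hkey, ae_restrict_mem measurableSet_Ioi] with t hle ht
        rw [← dlim_evp_eq_D (ZC ω) (le_of_lt ht)]
        exact ENNReal.ofReal_le_ofReal
          (mul_le_mul_of_nonneg_left hle (Real.exp_nonneg _))

/-- **Densities of the `ζ`-coordinates on the enlarged canonical space.**
With `z^i_t := lim_n n(ζ^i_t − ζ^i_{(t−1/n)⁺})` (and `0` where the limit fails to exist),
one has `Q`-a.s. `ζ^i_t = ∫_0^t z^i_s ds` for all `t ≥ 0`, and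
`E^Q[∫_0^∞ e^{−rt}|z^i_t|² dt] ≤ E^{P^i}[∫_0^∞ e^{−rt}|Z^i_t|² dt]`, for `i = 1,2`. -/
theorem zeta_coordinates_absolutely_continuous
    (m : ℕ) (r : ℝ) (hr : 0 < r)
    (μW : Measure C0) (hμWprob : IsProbabilityMeasure μW)
    (hμW : IsBMFam μW pathFilt (fun t w => ev t w))
    (G F : ℝ → ℝ → ℝ → Measure (ℝ × (Fin m → ℝ)) → (Fin m → ℝ) → ℝ)
    (φ ψ : ℝ → ℝ → C0 → Fin m → ℝ)
    (hφ : GoodCoef μW φ) (hψ : GoodCoef μW ψ)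
    -- the first set-up with its solution and the continuous-path versions of
    -- (X¹, Y¹, ∫_0^· Z¹_s ds)
    {Ω₁ : Type} [mΩ₁ : MeasurableSpace Ω₁] (P₁ : Measure Ω₁)
    (𝔽₁ : ℝ → MeasurableSpace Ω₁) (Bp₁ : Ω₁ → C0)
    (SI₁ : (ℝ → Ω₁ → ℝ) → ℝ → Ω₁ → ℝ) (ξ₁ η₁ : Ω₁ → ℝ)
    (hset₁ : IsSetup P₁ 𝔽₁ Bp₁ ξ₁ η₁)
    (X₁ Y₁ Z₁ : ℝ → Ω₁ → ℝ) (hsol₁ : Solves P₁ 𝔽₁ Bp₁ SI₁ r G F φ ψ ξ₁ η₁ X₁ Y₁ Z₁)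
    (XC₁ YC₁ ZC₁ : Ω₁ → Cp) (hmXC₁ : Measurable XC₁) (hmYC₁ : Measurable YC₁)
    (hmZC₁ : Measurable ZC₁)
    (hXC₁ : ∀ ω t, 0 ≤ t → evp t (XC₁ ω) = X₁ t ω)
    (hYC₁ : ∀ ω t, 0 ≤ t → evp t (YC₁ ω) = Y₁ t ω)
    (hZC₁ : ∀ ω t, 0 ≤ t → evp t (ZC₁ ω) = ∫ s in (0:ℝ)..t, Z₁ s ω)
    -- the second set-up
    {Ω₂ : Type} [mΩ₂ : MeasurableSpace Ω₂] (P₂ : Measure Ω₂)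
    (𝔽₂ : ℝ → MeasurableSpace Ω₂) (Bp₂ : Ω₂ → C0)
    (SI₂ : (ℝ → Ω₂ → ℝ) → ℝ → Ω₂ → ℝ) (ξ₂ η₂ : Ω₂ → ℝ)
    (hset₂ : IsSetup P₂ 𝔽₂ Bp₂ ξ₂ η₂)
    (X₂ Y₂ Z₂ : ℝ → Ω₂ → ℝ) (hsol₂ : Solves P₂ 𝔽₂ Bp₂ SI₂ r G F φ ψ ξ₂ η₂ X₂ Y₂ Z₂)
    (XC₂ YC₂ ZC₂ : Ω₂ → Cp) (hmXC₂ : Measurable XC₂) (hmYC₂ : Measurable YC₂)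
    (hmZC₂ : Measurable ZC₂)
    (hXC₂ : ∀ ω t, 0 ≤ t → evp t (XC₂ ω) = X₂ t ω)
    (hYC₂ : ∀ ω t, 0 ≤ t → evp t (YC₂ ω) = Y₂ t ω)
    (hZC₂ : ∀ ω t, 0 ≤ t → evp t (ZC₂ ω) = ∫ s in (0:ℝ)..t, Z₂ s ω)
    -- the common law of the inputs and the laws Q¹, Q² on the canonical space
    (Qin : Measure Ωin)
    (hQin₁ : Qin = P₁.map (fun ω => ((ξ₁ ω, η₁ ω, Bp₁ ω) : Ωin)))
    (hQin₂ : Qin = P₂.map (fun ω => ((ξ₂ ω, η₂ ω, Bp₂ ω) : Ωin)))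
    (Q₁ : Measure Ωcanon)
    (hQ₁ : Q₁ = P₁.map (fun ω => (((ξ₁ ω, η₁ ω, Bp₁ ω) : Ωin), (XC₁ ω, YC₁ ω, ZC₁ ω))))
    (Q₂ : Measure Ωcanon)
    (hQ₂ : Q₂ = P₂.map (fun ω => (((ξ₂ ω, η₂ ω, Bp₂ ω) : Ωin), (XC₂ ω, YC₂ ω, ZC₂ ω))))
    -- regular conditional probabilities q¹, q² given the input coordinate
    (q1 q2 : Ωin → Measure Ωout)
    (hq1prob : ∀ ι, IsProbabilityMeasure (q1 ι))
    (hq2prob : ∀ ι, IsProbabilityMeasure (q2 ι))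
    (hq1meas : ∀ A : Set Ωout, MeasurableSet A → Measurable fun ι => q1 ι A)
    (hq2meas : ∀ A : Set Ωout, MeasurableSet A → Measurable fun ι => q2 ι A)
    (hq1dis : ∀ (Gs : Set Ωin) (A : Set Ωout), MeasurableSet Gs → MeasurableSet A →
      Q₁ (Gs ×ˢ A) = ∫⁻ ι in Gs, q1 ι A ∂Qin)
    (hq2dis : ∀ (Gs : Set Ωin) (A : Set Ωout), MeasurableSet Gs → MeasurableSet A →
      Q₂ (Gs ×ˢ A) = ∫⁻ ι in Gs, q2 ι A ∂Qin)
    -- the measure Q on the enlarged canonical space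
    (QT : Measure Ωtot) (hQTprob : IsProbabilityMeasure QT)
    (hQT : ∀ (Gs : Set Ωin) (F₁ F₂ : Set Ωout),
      MeasurableSet Gs → MeasurableSet F₁ → MeasurableSet F₂ →
      QT (Gs ×ˢ F₁ ×ˢ F₂) = ∫⁻ ι in Gs, q1 ι F₁ * q2 ι F₂ ∂Qin)
    :
    (∀ᵐ ωT ∂QT, ∀ t, 0 ≤ t →
      cz1 t ωT = ∫ s in (0:ℝ)..t, dlim (fun u => cz1 u ωT) s) ∧
    (∀ᵐ ωT ∂QT, ∀ t, 0 ≤ t →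
      cz2 t ωT = ∫ s in (0:ℝ)..t, dlim (fun u => cz2 u ωT) s) ∧
    (∫⁻ ωT, ∫⁻ t in Set.Ioi (0:ℝ),
        ENNReal.ofReal (Real.exp (-r * t) * (dlim (fun u => cz1 u ωT) t) ^ 2) ∂volume ∂QT
      ≤ rNormSq P₁ r Z₁) ∧
    (∫⁻ ωT, ∫⁻ t in Set.Ioi (0:ℝ),
        ENNReal.ofReal (Real.exp (-r * t) * (dlim (fun u => cz2 u ωT) t) ^ 2) ∂volume ∂QT
      ≤ rNormSq P₂ r Z₂) := by
  obtain ⟨hP1prob, hmono1, hle1, hmBp1, hBM1, hmξ1, hξ1L2, hmη1, hη1L2⟩ := hset₁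
  obtain ⟨hP2prob, hmono2, hle2, hmBp2, hBM2, hmξ2, hξ2L2, hmη2, hη2L2⟩ := hset₂
  have hpr1 : Measurable (fun ωT : Ωtot => ωT.2.1.2.2) := measurable_snd.fst.snd.snd
  have hpr2 : Measurable (fun ωT : Ωtot => ωT.2.2.2.2) := measurable_snd.snd.snd.snd
  have hmg1 : Measurable (fun ω => (((ξ₁ ω, η₁ ω, Bp₁ ω) : Ωin), (XC₁ ω, YC₁ ω, ZC₁ ω))) :=
    ((hmξ1.mono (hle1 0) le_rfl).prodMk ((hmη1.mono (hle1 0) le_rfl).prodMk hmBp1)).prodMk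
      (hmXC₁.prodMk (hmYC₁.prodMk hmZC₁))
  have hmg2 : Measurable (fun ω => (((ξ₂ ω, η₂ ω, Bp₂ ω) : Ωin), (XC₂ ω, YC₂ ω, ZC₂ ω))) :=
    ((hmξ2.mono (hle2 0) le_rfl).prodMk ((hmη2.mono (hle2 0) le_rfl).prodMk hmBp2)).prodMk
      (hmXC₂.prodMk (hmYC₂.prodMk hmZC₂))
  have hmap1 : QT.map (fun ωT : Ωtot => ωT.2.1.2.2) = P₁.map ZC₁ := by
    refine Measure.ext fun A hA => ?_
    rw [Measure.map_apply hpr1 hA, Measure.map_apply hmZC₁ hA]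
    have hF1meas : MeasurableSet ((univ : Set Cp) ×ˢ ((univ : Set Cp) ×ˢ A)) :=
      MeasurableSet.univ.prod (MeasurableSet.univ.prod hA)
    have hpre : (fun ωT : Ωtot => ωT.2.1.2.2) ⁻¹' A
        = (univ : Set Ωin) ×ˢ
          (((univ : Set Cp) ×ˢ ((univ : Set Cp) ×ˢ A)) ×ˢ (univ : Set Ωout)) := by
      ext ωT
      simp [Set.mem_prod]
    rw [hpre, hQT univ _ univ MeasurableSet.univ hF1meas MeasurableSet.univ]
    have hq2univ : (∫⁻ ι in univ, q1 ι ((univ : Set Cp) ×ˢ ((univ : Set Cp) ×ˢ A)) * q2 ι univ ∂Qin)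
        = ∫⁻ ι in univ, q1 ι ((univ : Set Cp) ×ˢ ((univ : Set Cp) ×ˢ A)) ∂Qin := by
      apply lintegral_congr
      intro ι
      rw [(hq2prob ι).measure_univ, mul_one]
    rw [hq2univ, ← hq1dis univ _ MeasurableSet.univ hF1meas, hQ₁,
      Measure.map_apply hmg1 (MeasurableSet.univ.prod hF1meas)]
    congr 1
    ext ω
    simp [Set.mem_prod]
  have hmap2 : QT.map (fun ωT : Ωtot => ωT.2.2.2.2) = P₂.map ZC₂ := by
    refine Measure.ext fun A hA => ?_
    rw [Measure.map_apply hpr2 hA, Measure.map_apply hmZC₂ hA]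
    have hF2meas : MeasurableSet ((univ : Set Cp) ×ˢ ((univ : Set Cp) ×ˢ A)) :=
      MeasurableSet.univ.prod (MeasurableSet.univ.prod hA)
    have hpre : (fun ωT : Ωtot => ωT.2.2.2.2) ⁻¹' A
        = (univ : Set Ωin) ×ˢ
          ((univ : Set Ωout) ×ˢ ((univ : Set Cp) ×ˢ ((univ : Set Cp) ×ˢ A))) := by
      ext ωT
      simp [Set.mem_prod]
    rw [hpre, hQT univ univ _ MeasurableSet.univ MeasurableSet.univ hF2meas]
    have hq1univ : (∫⁻ ι in univ, q1 ι univ * q2 ι ((univ : Set Cp) ×ˢ ((univ : Set Cp) ×ˢ A)) ∂Qin)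
        = ∫⁻ ι in univ, q2 ι ((univ : Set Cp) ×ˢ ((univ : Set Cp) ×ˢ A)) ∂Qin := by
      apply lintegral_congr
      intro ι
      rw [(hq1prob ι).measure_univ, one_mul]
    rw [hq1univ, ← hq2dis univ _ MeasurableSet.univ hF2meas, hQ₂,
      Measure.map_apply hmg2 (MeasurableSet.univ.prod hF2meas)]
    congr 1
    ext ω
    simp [Set.mem_prod]
  have h1 := transfer P₁ r Z₁ ZC₁ hmZC₁ hZC₁ QT (fun ωT : Ωtot => ωT.2.1.2.2) hpr1 hmap1
  have h2 := transfer P₂ r Z₂ ZC₂ hmZC₂ hZC₂ QT (fun ωT : Ωtot => ωT.2.2.2.2) hpr2 hmap2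
  exact ⟨h1.1, h2.1, h1.2, h2.2⟩

end YW
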